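/- If a finite partial monitoring game (with k actions, d outcomes and signal set Σ) is globally observable, then for each pair of neighbours a and b there exists f : [k] × Σ → ℝ satisfying L(a,x) − L(b,x) = ∑_{c=1}^k f(c,Φ(c,x)) for all x ∈ [d] with sup_{c,σ} |f(c,σ)| ≤ d^{1/2} (1+k)^{d/2}. If the game is moreover locally observable, then f can additionally be chosen with f(c,σ) = 0 for all c ∉ N_{ab} and all σ ∈ Σ. -/

import Mathlib

open scoped BigOperators Classical

noncomputable section

/-- The affine dimension of a subset of `ℝ^d`, with the convention that the empty
set has dimension `-1`. -/
def affDim {d : ℕ} (s : Set (Fin d → ℝ)) : ℤ :=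
  if s = ∅ then -1 else (Module.finrank ℝ (affineSpan ℝ s).direction : ℤ)

/-- The cell of action `a`: distributions over outcomes for which `a` has minimal
expected loss. -/
def cell {k d : ℕ} (L : Fin k → Fin d → ℝ) (a : Fin k) : Set (Fin d → ℝ) :=
  {u | u ∈ stdSimplex ℝ (Fin d) ∧ ∀ b : Fin k, ∑ x, L a x * u x ≤ ∑ x, L b x * u x}

/-- An action is Pareto optimal if its cell has affine dimension `d - 1`. -/
def Pareto {k d : ℕ} (L : Fin k → Fin d → ℝ) (a : Fin k) : Prop :=
  affDim (cell L a) = (d : ℤ) - 1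

/-- Two Pareto optimal actions are neighbours if their cells intersect in a set of
affine dimension `d - 2`. -/
def Neighbours {k d : ℕ} (L : Fin k → Fin d → ℝ) (a b : Fin k) : Prop :=
  Pareto L a ∧ Pareto L b ∧ affDim (cell L a ∩ cell L b) = (d : ℤ) - 2

/-- A game is non-degenerate if there are no duplicate actions and every action is
Pareto optimal. -/
def NondegenerateGame {k d : ℕ} (L : Fin k → Fin d → ℝ) : Prop :=
  (∀ a b : Fin k, a ≠ b → (fun x => L a x) ≠ (fun x => L b x)) ∧ ∀ a : Fin k, Pareto L a

/-- The neighbourhood `N_a` of an action `a`. -/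
def nbhd {k d : ℕ} (L : Fin k → Fin d → ℝ) (a : Fin k) : Set (Fin k) :=
  {b | (d : ℤ) - 2 ≤ affDim (cell L a ∩ cell L b)}

/-- The set `N_{ab}` of actions whose cells are contained in `C_a ∩ C_b`. -/
def neighbourhoodSet {k d : ℕ} (L : Fin k → Fin d → ℝ) (a b : Fin k) : Set (Fin k) :=
  {c | cell L c ⊆ cell L a ∩ cell L b}

/-- A finite partial monitoring game is globally observable if all loss differences
between neighbouring actions can be estimated from the signals. -/
def GloballyObservable {k d : ℕ} {S : Type*} (L : Fin k → Fin d → ℝ)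
    (Φ : Fin k → Fin d → S) : Prop :=
  ∀ a b : Fin k, Neighbours L a b →
    ∃ f : Fin k → S → ℝ, ∀ x : Fin d, L a x - L b x = ∑ c : Fin k, f c (Φ c x)

/-- A finite partial monitoring game is locally observable if all loss differences
between neighbouring actions can be estimated using only signals of actions in `N_{ab}`. -/
def LocallyObservable {k d : ℕ} {S : Type*} (L : Fin k → Fin d → ℝ)
    (Φ : Fin k → Fin d → S) : Prop :=
  ∀ a b : Fin k, Neighbours L a b →
    ∃ f : Fin k → S → ℝ, (∀ x : Fin d, L a x - L b x = ∑ c : Fin k, f c (Φ c x)) ∧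
      ∀ c : Fin k, c ∉ neighbourhoodSet L a b → ∀ σ : S, f c σ = 0



section AuxEstimation

lemma lemC {m d k : ℕ} (hm : m ≤ d) (μ : Fin m → ℝ) (hpos : ∀ i, 0 < μ i)
    (htr : ∑ i, μ i ≤ (d : ℝ) * k) : ∏ i, (1 + μ i) ≤ ((1 : ℝ) + k) ^ d := by
  have hk0 : (0:ℝ) ≤ k := Nat.cast_nonneg k
  have hk1 : (1 : ℝ) ≤ 1 + k := by linarith
  rcases Nat.eq_zero_or_pos m with hm0 | hm0
  · subst hm0; simpa using one_le_pow₀ hk1 (n := d)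
  have hmR : (0 : ℝ) < m := by exact_mod_cast hm0
  have hz : ∀ i ∈ Finset.univ, (0 : ℝ) ≤ 1 + μ i := fun i _ => by have := hpos i; linarith
  -- AM-GM
  have hamgm := Real.geom_mean_le_arith_mean_weighted Finset.univ
    (fun _ => 1 / (m : ℝ)) (fun i => 1 + μ i)
    (fun i _ => by positivity)
    (by simp [Finset.sum_const]; field_simp) hz
  rw [Real.finset_prod_rpow Finset.univ _ hz] at hamgm
  have hrhs : ∑ i, (1 / (m : ℝ)) * (1 + μ i) = 1 + (∑ i, μ i) / m := by
    rw [← Finset.mul_sum]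
    rw [Finset.sum_add_distrib]
    simp [Finset.sum_const]
    field_simp
  rw [hrhs] at hamgm
  -- raise both sides to power m
  have hP : (0:ℝ) ≤ ∏ i, (1 + μ i) := Finset.prod_nonneg hz
  have h1 : ∏ i, (1 + μ i) ≤ (1 + (∑ i, μ i) / m) ^ m := by
    have := pow_le_pow_left₀ (Real.rpow_nonneg hP _) hamgm m
    rwa [← Real.rpow_natCast ((∏ i, (1 + μ i)) ^ (1/(m:ℝ))) m, ← Real.rpow_mul hP,
      one_div, inv_mul_cancel₀ (by positivity : (m:ℝ) ≠ 0), Real.rpow_one] at this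
  have hsum0 : (0:ℝ) ≤ ∑ i, μ i := Finset.sum_nonneg (fun i _ => (hpos i).le)
  have h2 : (1 + (∑ i, μ i) / m) ^ m ≤ (1 + (d : ℝ) * k / m) ^ m := by
    apply pow_le_pow_left₀ (by positivity)
    have h4 : (∑ i, μ i) / m ≤ (d:ℝ)*k/m := by gcongr
    linarith
  have h3 : (1 + (d : ℝ) * k / m) ^ m ≤ ((1:ℝ) + k) ^ d := by
    have hp1 : (1:ℝ) ≤ (d:ℝ)/m := by
      rw [le_div_iff₀ hmR]; simpa using (by exact_mod_cast hm : (m:ℝ) ≤ d)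
    have hb := one_add_mul_self_le_rpow_one_add (by linarith : (-1:ℝ) ≤ (k:ℝ)) hp1
    have : ((1:ℝ) + (d:ℝ)/m * k) ^ m ≤ (((1:ℝ)+k) ^ ((d:ℝ)/m)) ^ m := by
      apply pow_le_pow_left₀ (by positivity) hb
    calc (1 + (d : ℝ) * k / m) ^ m = ((1:ℝ) + (d:ℝ)/m * k) ^ m := by ring_nf
      _ ≤ (((1:ℝ)+k) ^ ((d:ℝ)/m)) ^ m := this
      _ = ((1:ℝ)+k) ^ d := by
          rw [← Real.rpow_natCast (((1:ℝ)+k) ^ ((d:ℝ)/m)) m, ← Real.rpow_mul (by positivity),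
            div_mul_cancel₀ _ (by positivity : (m:ℝ) ≠ 0), Real.rpow_natCast]
  linarith

open Matrix in
lemma lemB {m : ℕ} {G : Matrix (Fin m) (Fin m) ℝ} (hG : G.PosDef) (hdet : 1 ≤ G.det) (i : Fin m) :
    1 ≤ (∏ j, (1 + hG.isHermitian.eigenvalues j)) * hG.isHermitian.eigenvalues i := by
  set μ := hG.isHermitian.eigenvalues with hμ
  have hpos : ∀ j, 0 < μ j := fun j => hG.eigenvalues_pos j
  have hdetμ : G.det = ∏ j, μ j := by
    have := hG.isHermitian.det_eq_prod_eigenvalues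
    simpa using this
  have h1 : ∏ j ∈ Finset.univ.erase i, μ j ≤ ∏ j ∈ Finset.univ.erase i, (1 + μ j) :=
    Finset.prod_le_prod (fun j _ => (hpos j).le) (fun j _ => by linarith)
  have h2 : ∏ j ∈ Finset.univ.erase i, (1 + μ j) ≤ ∏ j, (1 + μ j) := by
    rw [← Finset.prod_erase_mul Finset.univ _ (Finset.mem_univ i)]
    have : (0:ℝ) ≤ ∏ j ∈ Finset.univ.erase i, (1 + μ j) :=
      Finset.prod_nonneg (fun j _ => by have := hpos j; linarith)
    nlinarith [hpos i]
  have h3 : (∏ j ∈ Finset.univ.erase i, μ j) * μ i = ∏ j, μ j :=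
    Finset.prod_erase_mul Finset.univ _ (Finset.mem_univ i)
  calc (1:ℝ) ≤ G.det := hdet
    _ = ∏ j, μ j := hdetμ
    _ = (∏ j ∈ Finset.univ.erase i, μ j) * μ i := h3.symm
    _ ≤ (∏ j ∈ Finset.univ.erase i, (1 + μ j)) * μ i :=
        mul_le_mul_of_nonneg_right h1 (hpos i).le
    _ ≤ (∏ j, (1 + μ j)) * μ i := mul_le_mul_of_nonneg_right h2 (hpos i).le

open Matrix in
lemma lemTr {m : ℕ} {G : Matrix (Fin m) (Fin m) ℝ} (hH : G.IsHermitian) :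
    ∑ i, hH.eigenvalues i = G.trace := by
  set U : Matrix (Fin m) (Fin m) ℝ := (hH.eigenvectorUnitary : Matrix (Fin m) (Fin m) ℝ) with hU
  have hspec : G = U * diagonal hH.eigenvalues * star U := by
    have := hH.spectral_theorem
    simpa [RCLike.ofReal_real_eq_id] using this
  have hUU : star U * U = 1 := (Matrix.mem_unitaryGroup_iff').mp hH.eigenvectorUnitary.2
  calc ∑ i, hH.eigenvalues i = (diagonal hH.eigenvalues).trace := by simp [Matrix.trace_diagonal]
    _ = (star U * (U * diagonal hH.eigenvalues)).trace := by rw [← Matrix.mul_assoc, hUU, Matrix.one_mul]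
    _ = ((U * diagonal hH.eigenvalues) * star U).trace := by rw [Matrix.trace_mul_comm]
    _ = G.trace := by rw [← hspec]

open Matrix in
lemma lemA {m : ℕ} {G : Matrix (Fin m) (Fin m) ℝ} (hG : G.PosDef) (c : Fin m → ℝ) (B : ℝ)
    (hB : ∀ i, 1 ≤ B * hG.isHermitian.eigenvalues i) :
    c ⬝ᵥ c ≤ B * (c ⬝ᵥ (G *ᵥ c)) := by
  have hH := hG.isHermitian
  set U : Matrix (Fin m) (Fin m) ℝ := (hH.eigenvectorUnitary : Matrix (Fin m) (Fin m) ℝ) with hU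
  set μ : Fin m → ℝ := hH.eigenvalues with hμ
  have hspec : G = U * diagonal μ * star U := by
    have := hH.spectral_theorem
    simpa [RCLike.ofReal_real_eq_id] using this
  have hUU : U * star U = 1 := (Matrix.mem_unitaryGroup_iff).mp hH.eigenvectorUnitary.2
  set y : Fin m → ℝ := star U *ᵥ c with hy
  have hvec : ∀ (M : Matrix (Fin m) (Fin m) ℝ) (w : Fin m → ℝ), c ⬝ᵥ (U * M) *ᵥ w = y ⬝ᵥ M *ᵥ w := by
    intro M w
    rw [← Matrix.mulVec_mulVec, Matrix.dotProduct_mulVec c U, hy]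
    congr 1
    ext i
    simp [Matrix.vecMul, Matrix.mulVec, dotProduct, Matrix.star_apply, mul_comm]
  have hform : c ⬝ᵥ (G *ᵥ c) = ∑ i, μ i * (y i)^2 := by
    rw [hspec, Matrix.mul_assoc, hvec (diagonal μ * star U) c, ← Matrix.mulVec_mulVec, ← hy]
    simp [dotProduct, Matrix.mulVec_diagonal]
    congr 1; ext i; ring
  have hnorm : c ⬝ᵥ c = ∑ i, (y i)^2 := by
    have h1 : c ⬝ᵥ ((U * star U) *ᵥ c) = y ⬝ᵥ y := by
      rw [hvec (star U) c, ← hy]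
    rw [hUU] at h1
    simp only [Matrix.one_mulVec] at h1
    rw [h1]
    simp [dotProduct]; congr 1; ext i; ring
  rw [hform, hnorm, Finset.mul_sum]
  apply Finset.sum_le_sum
  intro i _
  have h1 : 1 ≤ B * μ i := hB i
  have h2 : (0:ℝ) ≤ (y i)^2 := sq_nonneg _
  calc (y i)^2 = 1 * (y i)^2 := (one_mul _).symm
    _ ≤ (B * μ i) * (y i)^2 := by apply mul_le_mul_of_nonneg_right h1 h2
    _ = B * (μ i * (y i)^2) := by ring

open Matrix in
lemma coeff_bound {d k m : ℕ} (b : Fin m → (Fin d → ℝ))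
    (hind : LinearIndependent ℝ b)
    (h01 : ∀ i x, b i x = 0 ∨ b i x = 1)
    (hcount : ∀ x, (∑ i, b i x) ≤ (k : ℝ))
    (c : Fin m → ℝ)
    (hv : ∀ x, |∑ i, c i * b i x| ≤ 1) :
    ∀ i, |c i| ≤ Real.sqrt d * ((1:ℝ)+k) ^ ((d:ℝ)/2) := by
  -- m ≤ d
  have hm : m ≤ d := by
    have h1 := hind.fintype_card_le_finrank
    simpa [Module.finrank_fin_fun] using h1
  -- the Gram matrix
  set G : Matrix (Fin m) (Fin m) ℝ := Matrix.of (fun i j => ∑ x, b i x * b j x) with hGdef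
  have hGapp : ∀ i j, G i j = ∑ x, b i x * b j x := fun i j => rfl
  have hquad : ∀ u : Fin m → ℝ, u ⬝ᵥ (G *ᵥ u) = ∑ x, (∑ i, u i * b i x)^2 := by
    intro u
    simp only [dotProduct, Matrix.mulVec, hGapp]
    calc ∑ i, u i * ∑ j, (∑ x, b i x * b j x) * u j
        = ∑ i, ∑ j, ∑ x, u i * b i x * (u j * b j x) := by
          refine Finset.sum_congr rfl (fun i _ => ?_)
          rw [Finset.mul_sum]
          refine Finset.sum_congr rfl (fun j _ => ?_)
          rw [Finset.sum_mul, Finset.mul_sum]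
          exact Finset.sum_congr rfl (fun x _ => by ring)
      _ = ∑ i, ∑ x, ∑ j, u i * b i x * (u j * b j x) :=
          Finset.sum_congr rfl (fun i _ => Finset.sum_comm)
      _ = ∑ x, ∑ i, ∑ j, u i * b i x * (u j * b j x) := Finset.sum_comm
      _ = ∑ x, (∑ i, u i * b i x)^2 := by
          refine Finset.sum_congr rfl (fun x _ => ?_)
          rw [sq, Finset.sum_mul_sum]
  -- positive definiteness
  have hherm : G.IsHermitian := by
    rw [Matrix.IsHermitian]
    ext i j
    simp only [Matrix.conjTranspose_apply, hGapp, star_trivial]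
    exact Finset.sum_congr rfl (fun x _ => mul_comm _ _)
  have hpd : G.PosDef := by
    refine Matrix.posDef_iff_dotProduct_mulVec.mpr ⟨hherm, fun u hu => ?_⟩
    simp only [star_trivial]
    rw [hquad u]
    have hnn : 0 ≤ ∑ x, (∑ i, u i * b i x)^2 :=
      Finset.sum_nonneg (fun x _ => sq_nonneg _)
    rcases hnn.lt_or_eq with h | h
    · exact h
    · exfalso
      have hz : ∀ x, (∑ i, u i * b i x) = 0 := fun x =>
        sq_eq_zero_iff.mp ((Finset.sum_eq_zero_iff_of_nonneg
          (fun x _ => sq_nonneg _)).mp h.symm x (Finset.mem_univ x))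
      have : ∀ i, u i = 0 := by
        have := Fintype.linearIndependent_iff.mp hind u ?_
        · exact this
        · funext x
          rw [Finset.sum_apply]
          simpa [smul_eq_mul] using hz x
      exact hu (funext this)
  -- determinant is a positive integer
  have hdet1 : 1 ≤ G.det := by
    set Gz : Matrix (Fin m) (Fin m) ℤ :=
      Matrix.of (fun i j => ∑ x, (if b i x = 1 ∧ b j x = 1 then (1:ℤ) else 0)) with hGz
    have hmap : G = Gz.map (Int.cast : ℤ → ℝ) := by
      ext i j
      simp only [Matrix.map_apply, hGz, Matrix.of_apply, hGapp]
      push_cast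
      refine Finset.sum_congr rfl (fun x _ => ?_)
      rcases h01 i x with h | h <;> rcases h01 j x with h' | h' <;> simp [h, h']
    have hdd : G.det = ((Gz.det : ℤ) : ℝ) := by
      have h := RingHom.map_det (Int.castRingHom ℝ) Gz
      simp only [RingHom.mapMatrix_apply, Int.coe_castRingHom] at h
      rw [hmap, h]
    have hpos : (0:ℝ) < G.det := hpd.det_pos
    rw [hdd] at hpos ⊢
    exact_mod_cast (by exact_mod_cast hpos : (0:ℤ) < Gz.det)
  -- trace bound
  have htr : ∑ i, hpd.isHermitian.eigenvalues i ≤ (d:ℝ) * k := by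
    rw [lemTr hpd.isHermitian]
    have h1 : G.trace = ∑ x, ∑ i, b i x := by
      rw [Matrix.trace]
      calc ∑ i, G.diag i = ∑ i, ∑ x, b i x := by
            refine Finset.sum_congr rfl (fun i _ => ?_)
            rw [Matrix.diag_apply, hGapp]
            refine Finset.sum_congr rfl (fun x _ => ?_)
            rcases h01 i x with h | h <;> simp [h]
        _ = ∑ x, ∑ i, b i x := Finset.sum_comm
    rw [h1]
    calc ∑ x : Fin d, ∑ i, b i x ≤ ∑ x : Fin d, (k:ℝ) :=
          Finset.sum_le_sum (fun x _ => hcount x)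
      _ = (d:ℝ) * k := by simp [Finset.sum_const, mul_comm]
  set μ := hpd.isHermitian.eigenvalues with hμdef
  set B := ∏ j, (1 + μ j) with hBdef
  have hB : ∀ i, 1 ≤ B * μ i := lemB hpd hdet1
  have hBle : B ≤ ((1:ℝ)+k)^d := lemC hm μ (fun i => hpd.eigenvalues_pos i) htr
  have hBnn : (0:ℝ) ≤ B :=
    Finset.prod_nonneg (fun j _ => by have := hpd.eigenvalues_pos j; linarith)
  have hA := lemA hpd c B hB
  have hqd : c ⬝ᵥ (G *ᵥ c) ≤ (d:ℝ) := by
    rw [hquad c]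
    calc ∑ x, (∑ i, c i * b i x)^2 ≤ ∑ x : Fin d, (1:ℝ) := by
          refine Finset.sum_le_sum (fun x _ => ?_)
          have := hv x
          nlinarith [abs_nonneg (∑ i, c i * b i x), sq_abs (∑ i, c i * b i x),
            abs_nonneg (∑ i, c i * b i x)]
      _ = (d:ℝ) := by simp
  have hcc : ∀ i, (c i)^2 ≤ (d:ℝ) * ((1:ℝ)+k)^d := by
    intro i
    have h1 : (c i)^2 ≤ c ⬝ᵥ c := by
      rw [dotProduct]
      have : ∀ j ∈ Finset.univ, (0:ℝ) ≤ c j * c j := fun j _ => mul_self_nonneg _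
      calc (c i)^2 = c i * c i := by ring
        _ ≤ ∑ j, c j * c j := Finset.single_le_sum this (Finset.mem_univ i)
    have h2 : c ⬝ᵥ c ≤ B * (d:ℝ) := le_trans hA (by
      have hq0 : (0:ℝ) ≤ c ⬝ᵥ (G *ᵥ c) := by
        rw [hquad c]; exact Finset.sum_nonneg (fun x _ => sq_nonneg _)
      exact mul_le_mul_of_nonneg_left hqd hBnn)
    have h3 : B * (d:ℝ) ≤ ((1:ℝ)+k)^d * d := by
      apply mul_le_mul_of_nonneg_right hBle (Nat.cast_nonneg d)
    calc (c i)^2 ≤ c ⬝ᵥ c := h1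
      _ ≤ B * d := h2
      _ ≤ ((1:ℝ)+k)^d * d := h3
      _ = (d:ℝ) * ((1:ℝ)+k)^d := by ring
  intro i
  have h4 : |c i| = Real.sqrt ((c i)^2) := (Real.sqrt_sq_eq_abs _).symm
  rw [h4]
  have h5 : Real.sqrt ((c i)^2) ≤ Real.sqrt ((d:ℝ) * ((1:ℝ)+k)^d) :=
    Real.sqrt_le_sqrt (hcc i)
  have hk0 : (0:ℝ) ≤ 1 + k := by positivity
  have h6 : Real.sqrt ((d:ℝ) * ((1:ℝ)+k)^d) = Real.sqrt d * ((1:ℝ)+k) ^ ((d:ℝ)/2) := by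
    rw [Real.sqrt_mul (Nat.cast_nonneg d)]
    congr 1
    rw [Real.sqrt_eq_rpow, ← Real.rpow_natCast ((1:ℝ)+k) d, ← Real.rpow_mul hk0]
    congr 1
    ring
  rw [← h6]
  exact h5

lemma improve {k d : ℕ} {S : Type*} (L : Fin k → Fin d → ℝ)
    (hL : ∀ a x, L a x ∈ Set.Icc (0:ℝ) 1) (Φ : Fin k → Fin d → S)
    (a b : Fin k) (K : Set (Fin k)) (f0 : Fin k → S → ℝ)
    (hf0 : ∀ x, L a x - L b x = ∑ c, f0 c (Φ c x))
    (hsupp : ∀ c ∉ K, ∀ σ, f0 c σ = 0) :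
    ∃ f : Fin k → S → ℝ, (∀ x, L a x - L b x = ∑ c, f c (Φ c x)) ∧
      (∀ c σ, |f c σ| ≤ Real.sqrt d * ((1:ℝ)+k) ^ ((d:ℝ)/2)) ∧
      (∀ c ∉ K, ∀ σ, f c σ = 0) := by
  classical
  set col : Fin k → S → (Fin d → ℝ) := fun c σ => fun y => if Φ c y = σ then 1 else 0 with hcol
  set S₀ : Set (Fin d → ℝ) := {w | ∃ c, c ∈ K ∧ ∃ x : Fin d, w = col c (Φ c x)} with hS₀
  set v : Fin d → ℝ := fun x => L a x - L b x with hv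
  have hbnd0 : (0:ℝ) ≤ Real.sqrt d * ((1:ℝ)+k) ^ ((d:ℝ)/2) := by positivity
  have hcol1 : ∀ c σ y, col c σ y = 1 ↔ Φ c y = σ := by
    intro c σ y
    simp only [hcol]
    split <;> simp_all
  have hcol01 : ∀ c σ y, col c σ y = 0 ∨ col c σ y = 1 := by
    intro c σ y
    simp only [hcol]
    split <;> simp
  -- v lies in the span of the columns
  have hvmem : v ∈ Submodule.span ℝ S₀ := by
    have hgc : ∀ c : Fin k, (fun x => f0 c (Φ c x)) ∈ Submodule.span ℝ S₀ := by
      intro c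
      by_cases hc : c ∈ K
      · set n : Fin d → ℕ := fun x => (Finset.univ.filter (fun y => Φ c y = Φ c x)).card with hn
        have hn1 : ∀ x, 0 < n x := fun x => Finset.card_pos.mpr ⟨x, by simp [hn]⟩
        have heq : (fun x => f0 c (Φ c x)) =
            ∑ x : Fin d, (f0 c (Φ c x) / n x) • col c (Φ c x) := by
          funext z
          rw [Finset.sum_apply]
          have hterm : ∀ x : Fin d, ((f0 c (Φ c x) / n x) • col c (Φ c x)) z
              = if Φ c x = Φ c z then f0 c (Φ c z) / n z else 0 := by
            intro x
            by_cases h : Φ c x = Φ c z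
            · have h2 : n x = n z := by
                simp only [hn]
                congr 1
                apply Finset.filter_congr
                intro y _
                rw [h]
              have h3 : col c (Φ c x) z = 1 := (hcol1 c (Φ c x) z).mpr h.symm
              rw [if_pos h, Pi.smul_apply, smul_eq_mul, h3, mul_one, h, h2]
            · have h1 : ¬ (Φ c z = Φ c x) := fun hh => h hh.symm
              have h3 : col c (Φ c x) z = 0 := by
                rcases hcol01 c (Φ c x) z with hh | hh
                · exact hh
                · exact absurd ((hcol1 _ _ _).mp hh) h1
              rw [if_neg h, Pi.smul_apply, smul_eq_mul, h3, mul_zero]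
          rw [Finset.sum_congr rfl (fun x _ => hterm x), ← Finset.sum_filter,
            Finset.sum_const, nsmul_eq_mul]
          have hcard : (Finset.univ.filter (fun x => Φ c x = Φ c z)).card = n z := rfl
          rw [hcard, mul_div_cancel₀ _ (by exact_mod_cast (hn1 z).ne' : ((n z : ℝ)) ≠ 0)]
        rw [heq]
        exact Submodule.sum_mem _ (fun x _ =>
          Submodule.smul_mem _ _ (Submodule.subset_span ⟨c, hc, x, rfl⟩))
      · have h0 : (fun x => f0 c (Φ c x)) = (0 : Fin d → ℝ) :=
          funext (fun x => hsupp c hc _)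
        rw [h0]
        exact Submodule.zero_mem _
    have hveq : v = ∑ c : Fin k, (fun x => f0 c (Φ c x)) := by
      funext x
      rw [Finset.sum_apply]
      exact hf0 x
    rw [hveq]
    exact Submodule.sum_mem _ (fun c _ => hgc c)
  obtain ⟨t, hts, hspan, hindt⟩ := exists_linearIndependent ℝ S₀
  have hvt : v ∈ Submodule.span ℝ t := hspan ▸ hvmem
  obtain ⟨l, hlsupp, hlsum⟩ := Submodule.mem_span_set.mp hvt
  set T : Finset (Fin d → ℝ) := l.support with hT
  have hTS₀ : ∀ w ∈ T, w ∈ S₀ := fun w hw => hts (hlsupp hw)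
  -- canonical choice of an action for each column
  set pick : (Fin d → ℝ) → WithBot (Fin k) := fun w =>
    (Finset.univ.filter (fun c => c ∈ K ∧ ∃ x, w = col c (Φ c x))).min with hpick
  have hpickP : ∀ w, ∀ c : Fin k, pick w = (c : WithBot (Fin k)) →
      c ∈ K ∧ ∃ x, w = col c (Φ c x) := by
    intro w c h
    have := Finset.mem_of_min h
    simpa using this
  have hpickS : ∀ w ∈ S₀, ∃ c : Fin k, pick w = (c : WithBot (Fin k)) := by
    intro w hw
    obtain ⟨c, hc, x, hx⟩ := hw
    refine Finset.min_of_nonempty ⟨c, ?_⟩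
    simp only [Finset.mem_filter, Finset.mem_univ, true_and]
    exact ⟨hc, x, hx⟩
  -- rigidity: a column containing x is determined by its action and x
  have hrigid : ∀ (c : Fin k) (x x0 : Fin d), (col c (Φ c x0)) x = 1 →
      col c (Φ c x) = col c (Φ c x0) := by
    intro c x x0 h1
    have : Φ c x = Φ c x0 := (hcol1 c (Φ c x0) x).mp h1
    rw [this]
  -- enumerate T
  set m := T.card with hm
  set bb : Fin m → (Fin d → ℝ) := fun i => ((T.equivFin.symm i : T) : Fin d → ℝ) with hbb
  have hbmem : ∀ i, bb i ∈ T := fun i => (T.equivFin.symm i).2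
  have hsumT : ∀ (F : (Fin d → ℝ) → ℝ), ∑ i, F (bb i) = ∑ w ∈ T, F w := by
    intro F
    exact (Equiv.sum_comp T.equivFin.symm (fun w : T => F ↑w)).trans (Finset.sum_coe_sort T F)
  have hindT : LinearIndependent ℝ (fun w : (T : Set (Fin d → ℝ)) => (w : Fin d → ℝ)) :=
    (show LinearIndepOn ℝ id t from hindt).mono (fun w hw => hlsupp hw)
  have hindb : LinearIndependent ℝ bb := by
    have := hindT.comp (fun i : Fin m => (⟨(T.equivFin.symm i : T), by
      simp⟩ : (T : Set (Fin d → ℝ)))) (fun i j hij => by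
        apply T.equivFin.symm.injective
        apply Subtype.ext
        simpa using congrArg Subtype.val hij)
    exact this
  have h01b : ∀ i x, bb i x = 0 ∨ bb i x = 1 := by
    intro i x
    obtain ⟨c, _, x0, hw⟩ := hTS₀ (bb i) (hbmem i)
    rw [hw]
    exact hcol01 c _ x
  -- counting
  have hcard : ∀ x : Fin d, ((T.filter (fun w => w x = 1)).card : ℝ) ≤ (k:ℝ) := by
    intro x
    have hinj : ((T.filter (fun w => w x = 1)) : Set (Fin d → ℝ)).InjOn pick := by
      intro w hw w' hw' hww
      simp only [Finset.coe_filter, Set.mem_setOf_eq] at hw hw'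
      obtain ⟨c, hcw⟩ := hpickS w (hTS₀ w hw.1)
      obtain ⟨c', hcw'⟩ := hpickS w' (hTS₀ w' hw'.1)
      have hcc' : c = c' := by
        rw [hcw, hcw'] at hww
        exact_mod_cast hww
      subst hcc'
      obtain ⟨_, x0, hx0⟩ := hpickP w c hcw
      obtain ⟨_, x1, hx1⟩ := hpickP w' c hcw'
      have e0 : col c (Φ c x) = w := by
        rw [hx0]
        exact hrigid c x x0 (by rw [← hx0]; exact hw.2)
      have e1 : col c (Φ c x) = w' := by
        rw [hx1]
        exact hrigid c x x1 (by rw [← hx1]; exact hw'.2)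
      rw [← e0, ← e1]
    have hmaps : ∀ w ∈ T.filter (fun w => w x = 1),
        pick w ∈ Finset.univ.image (fun c : Fin k => (c : WithBot (Fin k))) := by
      intro w hw
      rw [Finset.mem_filter] at hw
      obtain ⟨c, hc⟩ := hpickS w (hTS₀ w hw.1)
      rw [hc]
      exact Finset.mem_image_of_mem _ (Finset.mem_univ c)
    have h1 := Finset.card_le_card_of_injOn pick hmaps hinj
    have h2 : (Finset.univ.image (fun c : Fin k => (c : WithBot (Fin k)))).card = k := by
      rw [Finset.card_image_of_injective _ (fun c c' h => by exact_mod_cast h)]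
      simp
    rw [h2] at h1
    exact_mod_cast h1
  have hcountb : ∀ x, (∑ i, bb i x) ≤ (k : ℝ) := by
    intro x
    rw [hsumT (fun w => w x)]
    have : ∑ w ∈ T, w x = ∑ w ∈ T, (if w x = 1 then (1:ℝ) else 0) := by
      refine Finset.sum_congr rfl (fun w hw => ?_)
      obtain ⟨c, _, x0, hw0⟩ := hTS₀ w hw
      rcases hcol01 c (Φ c x0) x with h | h
      · rw [hw0] at *; simp [h]
      · rw [hw0] at *; simp [h]
    rw [this, ← Finset.sum_filter, Finset.sum_const, nsmul_eq_mul, mul_one]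
    exact hcard x
  -- coefficients
  set cc : Fin m → ℝ := fun i => l (bb i) with hcc
  have hvx : ∀ x, ∑ i, cc i * bb i x = v x := by
    intro x
    rw [hsumT (fun w => l w * w x)]
    have := congrFun hlsum x
    rw [Finsupp.sum, Finset.sum_apply] at this
    rw [← this]
    exact Finset.sum_congr rfl (fun w _ => by simp [Pi.smul_apply, smul_eq_mul])
  have hv1 : ∀ x, |v x| ≤ 1 := by
    intro x
    obtain ⟨ha0, ha1⟩ := hL a x
    obtain ⟨hb0, hb1⟩ := hL b x
    rw [abs_le]
    constructor <;> simp only [hv] <;> linarith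
  have hlb := coeff_bound bb hindb h01b hcountb cc (fun x => by rw [hvx x]; exact hv1 x)
  have hlw : ∀ w ∈ T, |l w| ≤ Real.sqrt d * ((1:ℝ)+k) ^ ((d:ℝ)/2) := by
    intro w hw
    have := hlb (T.equivFin ⟨w, hw⟩)
    simpa [hbb, hcc, Equiv.symm_apply_apply] using this
  -- the improved estimation function
  refine ⟨fun c σ => if (col c σ ∈ T ∧ pick (col c σ) = (c : WithBot (Fin k)))
    then l (col c σ) else 0, ?_, ?_, ?_⟩
  · -- identity
    intro x
    have hlhs : L a x - L b x = ∑ w ∈ T.filter (fun w => w x = 1), l w := by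
      have h1 : L a x - L b x = v x := rfl
      have h2 : v x = ∑ w ∈ T, l w * w x := by
        rw [← hvx x, hsumT (fun w => l w * w x)]
      have h3 : ∑ w ∈ T, l w * w x = ∑ w ∈ T, (if w x = 1 then l w else 0) := by
        refine Finset.sum_congr rfl (fun w hw => ?_)
        obtain ⟨c, _, x0, hw0⟩ := hTS₀ w hw
        rcases hcol01 c (Φ c x0) x with h | h
        · rw [hw0] at *; simp [h]
        · rw [hw0] at *; simp [h]
      rw [h1, h2, h3, ← Finset.sum_filter]
    rw [hlhs]
    rw [← Finset.sum_filter (fun c => col c (Φ c x) ∈ T ∧ pick (col c (Φ c x)) = (c : WithBot (Fin k)))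
      (fun c => l (col c (Φ c x)))]
    symm
    apply Finset.sum_bij (fun (c : Fin k) _ => col c (Φ c x))
    · intro c hc
      rw [Finset.mem_filter] at hc ⊢
      exact ⟨hc.2.1, (hcol1 c (Φ c x) x).mpr rfl⟩
    · intro c hc c' hc' hcc'
      rw [Finset.mem_filter] at hc hc'
      have h1 := hc.2.2
      have h2 := hc'.2.2
      rw [hcc'] at h1
      rw [h1] at h2
      exact_mod_cast h2
    · intro w hw
      rw [Finset.mem_filter] at hw
      obtain ⟨c0, hc0⟩ := hpickS w (hTS₀ w hw.1)
      obtain ⟨_, x0, hx0⟩ := hpickP w c0 hc0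
      have e0 : col c0 (Φ c0 x) = w := by
        rw [hx0]
        exact hrigid c0 x x0 (by rw [← hx0]; exact hw.2)
      refine ⟨c0, ?_, e0⟩
      rw [Finset.mem_filter]
      refine ⟨Finset.mem_univ c0, ?_, ?_⟩
      · rw [e0]; exact hw.1
      · rw [e0]; exact hc0
    · intro c hc
      rfl
  · -- bound
    intro c σ
    by_cases h : col c σ ∈ T ∧ pick (col c σ) = (c : WithBot (Fin k))
    · simp only [if_pos h]
      exact hlw _ h.1
    · simp only [if_neg h]
      simpa using hbnd0
  · -- support
    intro c hc σ
    by_cases h : col c σ ∈ T ∧ pick (col c σ) = (c : WithBot (Fin k))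
    · exact absurd (hpickP _ c h.2).1 hc
    · simp only [if_neg h]

end AuxEstimation

/-- In a globally observable game the loss-difference estimation functions for each
pair of neighbours can be chosen with supremum norm at most `d^{1/2}(1+k)^{d/2}`;
in a locally observable game they can moreover be chosen supported on `N_{ab}`. -/
theorem estimation_function_sup_norm_bound {k d : ℕ} {S : Type*}
    (L : Fin k → Fin d → ℝ) (hL : ∀ a x, L a x ∈ Set.Icc (0:ℝ) 1)
    (Φ : Fin k → Fin d → S) :
    (GloballyObservable L Φ → ∀ a b : Fin k, Neighbours L a b →
      ∃ f : Fin k → S → ℝ, (∀ x : Fin d, L a x - L b x = ∑ c : Fin k, f c (Φ c x)) ∧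
        ∀ c : Fin k, ∀ σ : S, |f c σ| ≤ Real.sqrt d * ((1 : ℝ) + k) ^ ((d : ℝ) / 2)) ∧
    (LocallyObservable L Φ → ∀ a b : Fin k, Neighbours L a b →
      ∃ f : Fin k → S → ℝ, (∀ x : Fin d, L a x - L b x = ∑ c : Fin k, f c (Φ c x)) ∧
        (∀ c : Fin k, ∀ σ : S, |f c σ| ≤ Real.sqrt d * ((1 : ℝ) + k) ^ ((d : ℝ) / 2)) ∧
        ∀ c : Fin k, c ∉ neighbourhoodSet L a b → ∀ σ : S, f c σ = 0) := by
  constructor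
  · intro hobs a b hnb
    obtain ⟨f0, hf0⟩ := hobs a b hnb
    obtain ⟨f, h1, h2, -⟩ := improve L hL Φ a b Set.univ f0 hf0
      (fun c hc σ => absurd (Set.mem_univ c) hc)
    exact ⟨f, h1, h2⟩
  · intro hobs a b hnb
    obtain ⟨f0, hf0, hs⟩ := hobs a b hnb
    obtain ⟨f, h1, h2, h3⟩ := improve L hL Φ a b (neighbourhoodSet L a b) f0 hf0 hs
    exact ⟨f, h1, h2, h3⟩

end
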